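/- Suppose the k-dimensional random vector Z satisfies Assumption (A), let τ ∈ (0,1), u ∈ S^{k−1}, and let (a_τ, c_τ) be the unique minimizer of Ψ^c_{τu}(a,c) := E[ρ_τ(c'Z − a)] over M_u := {(a,c) : u'c = 1}. Set λ_τ := E[ρ_τ(c_τ'Z − a_τ)] (the minimal value) and write H^−_τ := {z : c_τ'z < a_τ}, H^+_τ := {z : c_τ'z ≥ a_τ}. Then (1/(1−τ)) E[Z·1_{Z ∈ H^+_τ}] − (1/τ) E[Z·1_{Z ∈ H^−_τ}] = (λ_τ / (τ(1−τ))) · u. -/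

import Mathlib

open MeasureTheory Matrix ENNReal

/-- The quantile check function `ρ_τ`. -/
noncomputable def rho (τ x : ℝ) : ℝ := x * (τ - if x < 0 then 1 else 0)

/-- Assumption (A): absolutely continuous distribution with a density whose support is
connected, and finite first-order moments. -/
def AssumptionA {k : ℕ} (μ : Measure (Fin (k + 1) → ℝ)) : Prop :=
  IsProbabilityMeasure μ ∧
    (∃ f : (Fin (k + 1) → ℝ) → ℝ, Measurable f ∧ (∀ z, 0 ≤ f z) ∧
      μ = volume.withDensity (fun z => ENNReal.ofReal (f z)) ∧
      IsConnected (Function.support f)) ∧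
    Integrable (fun z : Fin (k + 1) → ℝ => z) μ

/-- The constrained-form objective `Ψ^c_{τu}(a, c) = E[ρ_τ(c'Z − a)]`. -/
noncomputable def PsiC {k : ℕ} (μ : Measure (Fin (k + 1) → ℝ)) (τ : ℝ)
    (a : ℝ) (c : Fin (k + 1) → ℝ) : ℝ :=
  ∫ z, rho τ (c ⬝ᵥ z - a) ∂μ

lemma rho_eq_max (τ x : ℝ) : rho τ x = max (τ * x) ((τ - 1) * x) := by
  unfold rho
  rcases lt_or_ge x 0 with h | h
  · rw [if_pos h, max_eq_right (by nlinarith)]; ring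
  · rw [if_neg (not_lt.2 h), max_eq_left (by nlinarith)]; ring

lemma rho_lip {τ : ℝ} (h0 : 0 ≤ τ) (h1 : τ ≤ 1) (x y : ℝ) :
    |rho τ y - rho τ x| ≤ |y - x| := by
  rw [rho_eq_max, rho_eq_max]
  refine (abs_max_sub_max_le_max _ _ _ _).trans (max_le ?_ ?_)
  · rw [← mul_sub, abs_mul, abs_of_nonneg h0]
    nlinarith [abs_nonneg (y - x)]
  · rw [← mul_sub, abs_mul, abs_of_nonpos (by linarith)]
    nlinarith [abs_nonneg (y - x)]

lemma continuous_rho (τ : ℝ) : Continuous (rho τ) := by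
  have : rho τ = fun x => max (τ * x) ((τ - 1) * x) := funext (rho_eq_max τ)
  rw [this]
  exact (continuous_const.mul continuous_id).max (continuous_const.mul continuous_id)

lemma hasDerivAt_rho_shift {τ x : ℝ} (h : ℝ) (hx : x ≠ 0) :
    HasDerivAt (fun t : ℝ => rho τ (x + t * h)) (h * (τ - if x < 0 then 1 else 0)) 0 := by
  set s : ℝ := τ - if x < 0 then 1 else 0 with hs
  have hder : HasDerivAt (fun t : ℝ => (x + t * h) * s) (h * s) 0 := by
    have h1 : HasDerivAt (fun t : ℝ => x + t * h) h 0 := by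
      simpa using (((hasDerivAt_id (0:ℝ)).mul_const h).const_add x)
    simpa using h1.mul_const s
  apply hder.congr_of_eventuallyEq
  have hδ : (0:ℝ) < |x| / (|h| + 1) := div_pos (abs_pos.2 hx) (by positivity)
  filter_upwards [Metric.ball_mem_nhds (0:ℝ) hδ] with t ht
  have ht' : |t| < |x| / (|h| + 1) := by simpa [Real.dist_eq] using ht
  have hth : |t * h| < |x| := by
    rw [abs_mul]
    calc |t| * |h| ≤ |t| * (|h| + 1) := by nlinarith [abs_nonneg t]
      _ < |x| := by
          have := (lt_div_iff₀ (by positivity : (0:ℝ) < |h| + 1)).1 ht'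
          linarith
  rcases hx.lt_or_gt with hx' | hx'
  · have hlt : x + t * h < 0 := by
      rw [abs_of_neg hx'] at hth
      nlinarith [le_abs_self (t * h)]
    simp only [rho, hs, if_pos hlt, if_pos hx']
  · have hlt : ¬ (x + t * h < 0) := by
      rw [abs_of_pos hx'] at hth
      nlinarith [neg_abs_le (t * h)]
    simp only [rho, hs, if_neg hlt, if_neg (asymm hx')]

noncomputable def dotCLM {n : ℕ} (w : Fin n → ℝ) : (Fin n → ℝ) →L[ℝ] ℝ :=
  LinearMap.toContinuousLinearMap
    { toFun := fun z => w ⬝ᵥ z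
      map_add' := fun x y => dotProduct_add w x y
      map_smul' := fun r x => by simp [dotProduct_smul] }

@[simp] lemma dotCLM_apply {n : ℕ} (w z : Fin n → ℝ) : dotCLM w z = w ⬝ᵥ z := rfl

lemma measurable_dot {n : ℕ} (w : Fin n → ℝ) : Measurable (fun z : Fin n → ℝ => w ⬝ᵥ z) := by
  unfold dotProduct
  exact Finset.measurable_sum _ (fun i _ => (measurable_pi_apply i).const_mul _)

lemma hyperplane_null {n : ℕ} (c : Fin n → ℝ) (hc : c ≠ 0) (a : ℝ) :
    (volume : Measure (Fin n → ℝ)) {z | c ⬝ᵥ z = a} = 0 := by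
  have hcc : c ⬝ᵥ c ≠ 0 := by
    intro h
    apply hc
    funext i
    have h0 : ∀ j ∈ Finset.univ, (0:ℝ) ≤ c j * c j := fun j _ => mul_self_nonneg _
    have := (Finset.sum_eq_zero_iff_of_nonneg h0).1 h i (Finset.mem_univ i)
    exact mul_self_eq_zero.1 this
  set z₀ : Fin n → ℝ := (a / (c ⬝ᵥ c)) • c with hz₀
  have hcz₀ : c ⬝ᵥ z₀ = a := by
    rw [hz₀, dotProduct_smul, smul_eq_mul, div_mul_cancel₀ _ hcc]
  set K : Submodule ℝ (Fin n → ℝ) := LinearMap.ker ((dotCLM c) : (Fin n → ℝ) →ₗ[ℝ] ℝ) with hK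
  have hKne : K ≠ ⊤ := by
    intro h
    have : c ∈ K := h ▸ Submodule.mem_top
    rw [hK, LinearMap.mem_ker] at this
    exact hcc (by simpa using this)
  have hvolK : (volume : Measure (Fin n → ℝ)) K = 0 :=
    Measure.addHaar_submodule volume K hKne
  have hset : {z | c ⬝ᵥ z = a} = (fun z => z + (-z₀)) ⁻¹' (K : Set (Fin n → ℝ)) := by
    ext z
    simp only [Set.mem_setOf_eq, Set.mem_preimage, SetLike.mem_coe, hK, LinearMap.mem_ker]
    have : (dotCLM c : (Fin n → ℝ) →ₗ[ℝ] ℝ) (z + -z₀) = c ⬝ᵥ z - a := by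
      have h2 : c ⬝ᵥ (z + -z₀) = c ⬝ᵥ z - a := by
        rw [dotProduct_add, ← hcz₀]
        simp [sub_eq_add_neg]
      simpa using h2
    rw [this, sub_eq_zero]
  rw [hset, measure_preimage_add_right]
  exact hvolK

theorem stmt5 {k : ℕ} (μ : Measure (Fin (k + 1) → ℝ))
    (hA : AssumptionA μ) (τ : ℝ) (hτ : τ ∈ Set.Ioo (0:ℝ) 1)
    (u : Fin (k + 1) → ℝ) (hu : ∑ i, u i ^ 2 = 1)
    (a : ℝ) (c : Fin (k + 1) → ℝ) (hc : u ⬝ᵥ c = 1)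
    (hmin : ∀ a' : ℝ, ∀ c' : Fin (k + 1) → ℝ, u ⬝ᵥ c' = 1 → PsiC μ τ a c ≤ PsiC μ τ a' c') :
    (1 / (1 - τ)) • (∫ z, Set.indicator {z | a ≤ c ⬝ᵥ z} (fun z => z) z ∂μ) -
      (1 / τ) • (∫ z, Set.indicator {z | c ⬝ᵥ z < a} (fun z => z) z ∂μ) =
    (PsiC μ τ a c / (τ * (1 - τ))) • u := by
  obtain ⟨hτ0, hτ1⟩ := hτ
  haveI : IsProbabilityMeasure μ := hA.1
  obtain ⟨f, hfm, hf0, hμeq, -⟩ := hA.2.1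
  have hzint : Integrable (fun z : Fin (k + 1) → ℝ => z) μ := hA.2.2
  -- notation
  set s : (Fin (k + 1) → ℝ) → ℝ := fun z => τ - if c ⬝ᵥ z - a < 0 then 1 else 0 with hsdef
  have hsmeas : Measurable s := by
    apply measurable_const.sub
    exact Measurable.ite (measurableSet_lt ((measurable_dot c).sub measurable_const)
      measurable_const) measurable_const measurable_const
  have hsbdd : ∀ z, |s z| ≤ 1 := by
    intro z
    show |τ - if c ⬝ᵥ z - a < 0 then 1 else 0| ≤ 1
    split_ifs <;> rw [abs_le] <;> constructor <;> linarith
  -- integrability of dot products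
  have hdotint : ∀ w : Fin (k + 1) → ℝ, Integrable (fun z => w ⬝ᵥ z) μ := by
    intro w
    have := (dotCLM w).integrable_comp hzint
    simpa using this
  -- a.e. nonvanishing
  have hc0 : c ≠ 0 := by
    intro h
    rw [h] at hc
    simp at hc
  have hNull : μ {z | c ⬝ᵥ z = a} = 0 := by
    have h1 : (volume : Measure (Fin (k + 1) → ℝ)) {z | c ⬝ᵥ z = a} = 0 :=
      hyperplane_null c hc0 a
    rw [hμeq]
    exact (withDensity_absolutelyContinuous volume _) h1
  have hae : ∀ᵐ z ∂μ, c ⬝ᵥ z - a ≠ 0 := by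
    rw [ae_iff]
    convert hNull using 2
    ext z
    simp [sub_eq_zero]
  -- first order conditions
  have foc : ∀ (α : ℝ) (v : Fin (k + 1) → ℝ), u ⬝ᵥ v = 0 →
      ∫ z, (v ⬝ᵥ z - α) * s z ∂μ = 0 := by
    intro α v huv
    set F : ℝ → (Fin (k + 1) → ℝ) → ℝ :=
      fun t z => rho τ ((c ⬝ᵥ z - a) + t * (v ⬝ᵥ z - α)) with hF
    have hφ : ∀ t, (∫ z, F t z ∂μ) = PsiC μ τ (a + t * α) (c + t • v) := by
      intro t
      unfold PsiC
      apply integral_congr_ae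
      filter_upwards with z
      rw [hF]
      congr 1
      rw [add_dotProduct, smul_dotProduct, smul_eq_mul]
      ring
    have key :
        Integrable (fun z => (v ⬝ᵥ z - α) * s z) μ ∧
        HasDerivAt (fun t => ∫ z, F t z ∂μ) (∫ z, (v ⬝ᵥ z - α) * s z ∂μ) 0 := by
      apply hasDerivAt_integral_of_dominated_loc_of_lip
        (bound := fun z => |v ⬝ᵥ z - α|) (Metric.ball_mem_nhds 0 one_pos)
      · filter_upwards with t
        apply Measurable.aestronglyMeasurable
        exact (continuous_rho τ).measurable.comp
          (((measurable_dot c).sub measurable_const).add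
            ((((measurable_dot v)).sub measurable_const).const_mul t))
      · -- Integrable (F 0)
        apply Integrable.mono ((hdotint c).sub (integrable_const a)).abs
        · apply Measurable.aestronglyMeasurable
          exact (continuous_rho τ).measurable.comp
            (((measurable_dot c).sub measurable_const).add
              ((((measurable_dot v)).sub measurable_const).const_mul 0))
        · filter_upwards with z
          have h0 : rho τ 0 = 0 := by simp [rho]
          have := rho_lip hτ0.le hτ1.le 0 ((c ⬝ᵥ z - a) + 0 * (v ⬝ᵥ z - α))
          rw [h0, sub_zero] at this
          simp only [Real.norm_eq_abs, hF, abs_abs]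
          simpa using this
      · exact (((measurable_dot v).sub measurable_const).mul hsmeas).aestronglyMeasurable
      · filter_upwards with z
        rw [lipschitzOnWith_iff_dist_le_mul]
        intro t _ t' _
        rw [Real.dist_eq, Real.dist_eq]
        have := rho_lip hτ0.le hτ1.le
          ((c ⬝ᵥ z - a) + t' * (v ⬝ᵥ z - α)) ((c ⬝ᵥ z - a) + t * (v ⬝ᵥ z - α))
        calc |F t z - F t' z| ≤ |((c ⬝ᵥ z - a) + t * (v ⬝ᵥ z - α)) -
              ((c ⬝ᵥ z - a) + t' * (v ⬝ᵥ z - α))| := this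
          _ = |v ⬝ᵥ z - α| * |t - t'| := by
              rw [← abs_mul]; ring_nf
          _ ≤ ↑(Real.nnabs (|v ⬝ᵥ z - α|)) * |t - t'| := by
              rw [Real.coe_nnabs, abs_abs]
      · exact ((hdotint v).sub (integrable_const α)).abs
      · filter_upwards [hae] with z hz
        have := hasDerivAt_rho_shift (τ := τ) (x := c ⬝ᵥ z - a) (v ⬝ᵥ z - α) hz
        simpa [hF, hsdef, mul_comm] using this
    -- local min, derivative zero
    have hlocmin : IsLocalMin (fun t => ∫ z, F t z ∂μ) 0 := by
      apply Filter.Eventually.of_forall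
      intro t
      show (∫ z, F 0 z ∂μ) ≤ ∫ z, F t z ∂μ
      rw [hφ t, hφ 0]
      have h0 : PsiC μ τ (a + 0 * α) (c + (0:ℝ) • v) = PsiC μ τ a c := by norm_num
      rw [h0]
      apply hmin
      rw [dotProduct_add, hc, dotProduct_smul, huv, smul_eq_mul, mul_zero, add_zero]
    exact hlocmin.hasDerivAt_eq_zero key.2
  -- integral of s is zero
  have hsint : Integrable s μ := by
    apply Integrable.mono' (integrable_const (1:ℝ)) hsmeas.aestronglyMeasurable
    filter_upwards with z
    simpa using hsbdd z
  have hs0 : ∫ z, s z ∂μ = 0 := by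
    have := foc 1 0 (by simp)
    simp only [zero_dotProduct, zero_sub, neg_one_mul] at this
    rw [integral_neg] at this
    linarith
  -- the vector m
  have hmint : Integrable (fun z => s z • z) μ := by
    apply Integrable.mono hzint (hsmeas.smul measurable_id).aestronglyMeasurable
    filter_upwards with z
    show ‖s z • z‖ ≤ ‖z‖
    rw [norm_smul]
    calc ‖s z‖ * ‖z‖ ≤ 1 * ‖z‖ := by
          apply mul_le_mul_of_nonneg_right _ (norm_nonneg z)
          simpa using hsbdd z
      _ = ‖z‖ := one_mul _
  set m : Fin (k + 1) → ℝ := ∫ z, s z • z ∂μ with hmdef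
  have hswap : ∀ w : Fin (k + 1) → ℝ, w ⬝ᵥ m = ∫ z, s z * (w ⬝ᵥ z) ∂μ := by
    intro w
    have h2 := (dotCLM w).integral_comp_comm hmint
    rw [hmdef]
    rw [show w ⬝ᵥ (∫ z, s z • z ∂μ) = ∫ z, (dotCLM w) (s z • z) ∂μ from h2.symm]
    apply integral_congr_ae
    filter_upwards with z
    simp [dotProduct_smul]
  -- orthogonality
  have horth : ∀ v : Fin (k + 1) → ℝ, u ⬝ᵥ v = 0 → v ⬝ᵥ m = 0 := by
    intro v huv
    rw [hswap v]
    have := foc 0 v huv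
    rw [← this]
    apply integral_congr_ae
    filter_upwards with z
    ring
  have huu : u ⬝ᵥ u = 1 := by
    unfold dotProduct
    rw [← hu]
    apply Finset.sum_congr rfl
    intro i _
    ring
  -- m = (u ⬝ᵥ m) • u
  have hmu : m = (u ⬝ᵥ m) • u := by
    set v : Fin (k + 1) → ℝ := m - (u ⬝ᵥ m) • u with hvdef
    have huv : u ⬝ᵥ v = 0 := by
      rw [hvdef, dotProduct_sub, dotProduct_smul, huu, smul_eq_mul, mul_one, sub_self]
    have hvm : v ⬝ᵥ m = 0 := horth v huv
    have hvu : v ⬝ᵥ u = 0 := by rw [dotProduct_comm]; exact huv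
    have hvv : v ⬝ᵥ v = 0 := by
      rw [hvdef]
      nth_rewrite 2 [← hvdef]
      rw [dotProduct_sub, dotProduct_smul] at *
      rw [hvm, hvu]
      simp
    have hv0 : v = 0 := by
      funext i
      have h0 : ∀ j ∈ Finset.univ, (0:ℝ) ≤ v j * v j := fun j _ => mul_self_nonneg _
      have := (Finset.sum_eq_zero_iff_of_nonneg h0).1 hvv i (Finset.mem_univ i)
      exact mul_self_eq_zero.1 this
    rw [hvdef] at hv0
    have := sub_eq_zero.1 hv0
    exact this
  -- lambda = u ⬝ᵥ m and m = lam • u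
  have hcu : c ⬝ᵥ u = 1 := by rw [dotProduct_comm]; exact hc
  have hcsint : Integrable (fun z => s z * (c ⬝ᵥ z)) μ := by
    have := (dotCLM c).integrable_comp hmint
    apply this.congr
    filter_upwards with z
    simp [dotProduct_smul]
  have hlam : PsiC μ τ a c = c ⬝ᵥ m := by
    unfold PsiC
    have h1 : ∀ z, rho τ (c ⬝ᵥ z - a) = s z * (c ⬝ᵥ z) - a * s z := by
      intro z
      rw [rho, hsdef]
      ring
    rw [integral_congr_ae (Filter.Eventually.of_forall (fun z => h1 z))]
    rw [integral_sub hcsint (hsint.const_mul a), integral_const_mul, hs0, mul_zero, sub_zero]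
    rw [hswap c]
  have hum : PsiC μ τ a c = u ⬝ᵥ m := by
    rw [hlam]
    nth_rewrite 1 [hmu]
    rw [dotProduct_smul, hcu, smul_eq_mul, mul_one]
  have hmlam : m = (PsiC μ τ a c) • u := by
    rw [hum]
    exact hmu
  -- decompose m into indicator integrals
  have hSp : MeasurableSet {z : Fin (k + 1) → ℝ | a ≤ c ⬝ᵥ z} :=
    measurableSet_le measurable_const (measurable_dot c)
  have hSm : MeasurableSet {z : Fin (k + 1) → ℝ | c ⬝ᵥ z < a} :=
    measurableSet_lt (measurable_dot c) measurable_const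
  have hintp : Integrable ((Set.indicator {z | a ≤ c ⬝ᵥ z} (fun z => z))) μ :=
    hzint.indicator hSp
  have hintm : Integrable ((Set.indicator {z | c ⬝ᵥ z < a} (fun z => z))) μ :=
    hzint.indicator hSm
  set Ip : Fin (k + 1) → ℝ := ∫ z, Set.indicator {z | a ≤ c ⬝ᵥ z} (fun z => z) z ∂μ with hIp
  set Im : Fin (k + 1) → ℝ := ∫ z, Set.indicator {z | c ⬝ᵥ z < a} (fun z => z) z ∂μ with hIm
  have hdecomp : τ • Ip - (1 - τ) • Im = m := by
    have h1 : Integrable (fun z => τ • Set.indicator {z | a ≤ c ⬝ᵥ z} (fun z => z) z) μ :=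
      hintp.smul τ
    have h2 : Integrable (fun z => (1 - τ) • Set.indicator {z | c ⬝ᵥ z < a} (fun z => z) z) μ :=
      hintm.smul (1 - τ)
    have hpt : ∀ z, s z • z = τ • Set.indicator {z | a ≤ c ⬝ᵥ z} (fun z => z) z -
        (1 - τ) • Set.indicator {z | c ⬝ᵥ z < a} (fun z => z) z := by
      intro z
      by_cases h : c ⬝ᵥ z < a
      · rw [Set.indicator_of_notMem (by simpa using not_le.2 h),
          Set.indicator_of_mem (by exact h), smul_zero, zero_sub]
        have hsz : s z = τ - 1 := by
          show (τ - if c ⬝ᵥ z - a < 0 then 1 else 0) = τ - 1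
          rw [if_pos (by linarith)]
        rw [hsz]
        funext i
        simp only [Pi.smul_apply, Pi.neg_apply, smul_eq_mul]
        ring
      · rw [Set.indicator_of_mem (by exact not_lt.1 h),
          Set.indicator_of_notMem (by simpa using h), smul_zero, sub_zero]
        have hsz : s z = τ := by
          show (τ - if c ⬝ᵥ z - a < 0 then 1 else 0) = τ
          rw [if_neg (by rw [not_lt] at h ⊢; linarith), sub_zero]
        rw [hsz]
    rw [hIp, hIm, hmdef,
      integral_congr_ae (Filter.Eventually.of_forall hpt),
      integral_sub h1 h2, integral_smul, integral_smul]
  -- final algebra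
  have hτne : τ ≠ 0 := ne_of_gt hτ0
  have h1τ : (1:ℝ) - τ ≠ 0 := ne_of_gt (by linarith)
  have e1 : (1:ℝ) / (τ * (1 - τ)) * τ = 1 / (1 - τ) := by field_simp
  have e2 : (1:ℝ) / (τ * (1 - τ)) * (1 - τ) = 1 / τ := by field_simp
  calc (1 / (1 - τ)) • Ip - (1 / τ) • Im
      = (1 / (τ * (1 - τ))) • (τ • Ip - (1 - τ) • Im) := by
        rw [smul_sub, smul_smul, smul_smul, e1, e2]
    _ = (1 / (τ * (1 - τ))) • m := by rw [hdecomp]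
    _ = (PsiC μ τ a c / (τ * (1 - τ))) • u := by
        rw [hmlam, smul_smul]
        congr 1
        field_simp
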